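/- For any points X_1,…,X_n ∈ ℝ^p and Y_1,…,Y_n ∈ ℝ^q, the squared empirical martingale difference divergence is nonnegative: MDD_n²(Y|X) = (1/n²)∑_{i,j=1}^n A_{ij} B_{ij} ≥ 0. -/

import Mathlib

open MeasureTheory Finset

/-- Double-centering of an `n × n` array of reals:
`r̃_{ij} = r_{ij} − (1/n)∑_k r_{kj} − (1/n)∑_k r_{ik} + (1/n²)∑_{k,ℓ} r_{kℓ}`. -/
noncomputable def doubleCenter {n : ℕ} (r : Fin n → Fin n → ℝ) (i j : Fin n) : ℝ :=
  r i j - (∑ k, r k j) / n - (∑ k, r i k) / n + (∑ k, ∑ l, r k l) / (n : ℝ) ^ 2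

/-- The squared empirical martingale difference divergence
`MDD_n²(Y|X) = (1/n²)∑_{i,j} A_{ij} B_{ij}`, where `A` and `B` are the double-centerings of
`a_{ij} = |X_i − X_j|` and `b_{ij} = (1/2)|Y_i − Y_j|²`. -/
noncomputable def mddnSq {n p q : ℕ}
    (X : Fin n → EuclideanSpace ℝ (Fin p)) (Y : Fin n → EuclideanSpace ℝ (Fin q)) : ℝ :=
  (∑ i, ∑ j, doubleCenter (fun i j => ‖X i - X j‖) i j
      * doubleCenter (fun i j => ‖Y i - Y j‖ ^ 2 / 2) i j) / (n : ℝ) ^ 2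

section aux

lemma gram_nonneg {ι κ : Type*} [Fintype ι] [Fintype κ] (v : ι → κ → ℝ) :
    0 ≤ ∑ i, ∑ j, ∑ k, v i k * v j k := by
  have h : ∑ i, ∑ j, ∑ k, v i k * v j k = ∑ k, (∑ i, v i k) ^ 2 := by
    simp_rw [sq, Finset.sum_mul_sum]
    calc ∑ i, ∑ j, ∑ k, v i k * v j k
        = ∑ i, ∑ k, ∑ j, v i k * v j k :=
          Finset.sum_congr rfl fun i _ => Finset.sum_comm
      _ = ∑ k, ∑ i, ∑ j, v i k * v j k := Finset.sum_comm
  rw [h]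
  exact Finset.sum_nonneg fun k _ => sq_nonneg _

lemma inner_pow_pd {n p : ℕ} (x : Fin n → EuclideanSpace ℝ (Fin p)) (d : Fin n → ℝ) (m : ℕ) :
    0 ≤ ∑ i, ∑ j, d i * d j * (inner ℝ (x i) (x j) : ℝ) ^ m := by
  have hinner : ∀ i j, (inner ℝ (x i) (x j) : ℝ) = ∑ k, x i k * x j k := by
    intro i j
    simp [PiLp.inner_apply, RCLike.inner_apply, conj_trivial]
    exact Finset.sum_congr rfl fun k _ => mul_comm _ _
  have key : ∀ i j, d i * d j * (inner ℝ (x i) (x j) : ℝ) ^ m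
      = ∑ f : Fin m → Fin p, (d i * ∏ t, x i (f t)) * (d j * ∏ t, x j (f t)) := by
    intro i j
    rw [hinner, Fintype.sum_pow, Finset.mul_sum]
    refine Finset.sum_congr rfl fun f _ => ?_
    rw [Finset.prod_mul_distrib]; ring
  simp_rw [key]
  exact gram_nonneg _

lemma gauss_pd {n p : ℕ} (x : Fin n → EuclideanSpace ℝ (Fin p)) (c : Fin n → ℝ) {t : ℝ} (ht : 0 ≤ t) :
    0 ≤ ∑ i, ∑ j, c i * c j * Real.exp (-(t * ‖x i - x j‖ ^ 2)) := by
  have hexp : ∀ y : ℝ, Real.exp y = ∑' m : ℕ, y ^ m / m.factorial := by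
    intro y; rw [Real.exp_eq_exp_ℝ, NormedSpace.exp_eq_tsum_div]
  set d : Fin n → ℝ := fun i => c i * Real.exp (-(t * ‖x i‖ ^ 2)) with hd
  set f : Fin n → Fin n → ℕ → ℝ := fun i j m =>
    d i * d j * ((2*t) ^ m / m.factorial * (inner ℝ (x i) (x j) : ℝ) ^ m) with hf
  have hsum : ∀ i j, Summable (f i j) := by
    intro i j
    have : f i j = fun m => d i * d j * ((2*t*(inner ℝ (x i) (x j) : ℝ)) ^ m / m.factorial) := by
      funext m; simp only [hf, mul_pow]; ring
    rw [this]
    exact (Real.summable_pow_div_factorial _).mul_left _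
  have hterm : ∀ i j, c i * c j * Real.exp (-(t * ‖x i - x j‖ ^ 2))
      = ∑' m : ℕ, f i j m := by
    intro i j
    have hns : ‖x i - x j‖ ^ 2 = ‖x i‖^2 - 2 * inner ℝ (x i) (x j) + ‖x j‖^2 :=
      norm_sub_sq_real _ _
    have harg : -(t * (‖x i‖^2 - 2 * (inner ℝ (x i) (x j) : ℝ) + ‖x j‖^2))
        = -(t*‖x i‖^2) + (-(t*‖x j‖^2) + (2*t) * inner ℝ (x i) (x j)) := by ring
    rw [hns, harg, Real.exp_add, Real.exp_add]
    calc c i * c j * (Real.exp (-(t*‖x i‖^2)) * (Real.exp (-(t*‖x j‖^2))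
            * Real.exp ((2*t) * (inner ℝ (x i) (x j) : ℝ))))
        = d i * d j * ∑' m : ℕ, ((2*t) * (inner ℝ (x i) (x j) : ℝ)) ^ m / m.factorial := by
          rw [hexp ((2*t) * (inner ℝ (x i) (x j) : ℝ))]; simp only [hd]; ring
      _ = ∑' m : ℕ, d i * d j * (((2*t) * (inner ℝ (x i) (x j) : ℝ)) ^ m / m.factorial) :=
          tsum_mul_left.symm
      _ = ∑' m : ℕ, f i j m := tsum_congr fun m => by simp only [hf, mul_pow]; ring
  simp_rw [hterm]
  have h1 : ∀ i, ∑ j, ∑' m, f i j m = ∑' m, ∑ j, f i j m := fun i =>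
    (Summable.tsum_finsetSum fun j _ => hsum i j).symm
  simp_rw [h1]
  rw [← Summable.tsum_finsetSum fun i _ => summable_sum fun j _ => hsum i j]
  refine tsum_nonneg fun m => ?_
  have : ∀ i j, f i j m = (2*t) ^ m / m.factorial * (d i * d j * (inner ℝ (x i) (x j) : ℝ) ^ m) := by
    intro i j; simp only [hf]; ring
  simp_rw [this, ← Finset.mul_sum]
  exact mul_nonneg (div_nonneg (pow_nonneg (by linarith) _) (by positivity)) (inner_pow_pd x d m)


lemma kernel_integrable {r : ℝ} (hr : 0 ≤ r) :
    IntegrableOn (fun s : ℝ => (1 - Real.exp (-(s*r))) * s ^ (-(3:ℝ)/2)) (Set.Ioi 0) := by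
  have hmeas : Measurable (fun s : ℝ => (1 - Real.exp (-(s*r))) * s ^ (-(3:ℝ)/2)) := by
    measurability
  have hsplit : Set.Ioi (0:ℝ) = Set.Ioc 0 1 ∪ Set.Ioi 1 := (Set.Ioc_union_Ioi_eq_Ioi zero_le_one).symm
  rw [hsplit]
  have hub : ∀ s : ℝ, 0 < s → (1 - Real.exp (-(s*r))) * s ^ (-(3:ℝ)/2)
      = |(1 - Real.exp (-(s*r))) * s ^ (-(3:ℝ)/2)| := by
    intro s hs
    rw [abs_of_nonneg]
    have h0 : Real.exp (-(s*r)) ≤ 1 := Real.exp_le_one_iff.mpr (by nlinarith)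
    exact mul_nonneg (by linarith) (Real.rpow_nonneg hs.le _)
  refine IntegrableOn.union ?_ ?_
  · -- on Set.Ioc 0 1, dominate by r * s^(-1/2)
    have hint : IntegrableOn (fun s : ℝ => r * s ^ (-(1:ℝ)/2)) (Set.Ioc 0 1) := by
      have h2 : IntervalIntegrable (fun x : ℝ => x ^ (-(1:ℝ)/2)) volume 0 1 :=
        intervalIntegral.intervalIntegrable_rpow' (by norm_num)
      rw [intervalIntegrable_iff_integrableOn_Ioc_of_le zero_le_one] at h2
      exact h2.const_mul r
    refine hint.mono' hmeas.aestronglyMeasurable ?_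
    rw [ae_restrict_iff' measurableSet_Ioc]
    refine Filter.Eventually.of_forall fun s hs => ?_
    have hs0 : 0 < s := hs.1
    rw [Real.norm_eq_abs, ← hub s hs0]
    have h1 : 1 - Real.exp (-(s*r)) ≤ s * r := by
      have := Real.add_one_le_exp (-(s*r)); linarith
    calc (1 - Real.exp (-(s*r))) * s ^ (-(3:ℝ)/2)
        ≤ (s * r) * s ^ (-(3:ℝ)/2) :=
          mul_le_mul_of_nonneg_right h1 (Real.rpow_nonneg hs0.le _)
      _ = r * (s ^ (1:ℝ) * s ^ (-(3:ℝ)/2)) := by rw [Real.rpow_one]; ring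
      _ = r * s ^ (-(1:ℝ)/2) := by rw [← Real.rpow_add hs0]; norm_num
  · -- on Set.Ioi 1, dominate by s^(-3/2)
    have hint : IntegrableOn (fun s : ℝ => s ^ (-(3:ℝ)/2)) (Set.Ioi 1) :=
      integrableOn_Ioi_rpow_of_lt (by norm_num) zero_lt_one
    refine hint.mono' hmeas.aestronglyMeasurable ?_
    rw [ae_restrict_iff' measurableSet_Ioi]
    refine Filter.Eventually.of_forall fun s hs => ?_
    have hs0 : (0:ℝ) < s := lt_trans zero_lt_one hs
    rw [Real.norm_eq_abs, ← hub s hs0]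
    have h1 : 1 - Real.exp (-(s*r)) ≤ 1 := by
      have := Real.exp_pos (-(s*r)); linarith
    calc (1 - Real.exp (-(s*r))) * s ^ (-(3:ℝ)/2)
        ≤ 1 * s ^ (-(3:ℝ)/2) := mul_le_mul_of_nonneg_right h1 (Real.rpow_nonneg hs0.le _)
      _ = s ^ (-(3:ℝ)/2) := one_mul _

noncomputable def sqrtC : ℝ := ∫ s in Set.Ioi (0:ℝ), (1 - Real.exp (-s)) * s ^ (-(3:ℝ)/2)

lemma sqrtC_pos : 0 < sqrtC := by
  rw [sqrtC]
  have hsupp : (Function.support fun s : ℝ => (1 - Real.exp (-s)) * s ^ (-(3:ℝ)/2)) ∩ Set.Ioi 0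
      = Set.Ioi 0 := by
    rw [Set.inter_eq_right]
    intro s hs
    rw [Function.mem_support]
    have h1 : Real.exp (-s) < 1 := Real.exp_lt_one_iff.mpr (by simpa using hs)
    exact mul_ne_zero (by linarith) (Real.rpow_pos_of_pos hs _).ne'
  rw [setIntegral_pos_iff_support_of_nonneg_ae]
  · rw [hsupp, Real.volume_Ioi, ← ENNReal.ofReal_zero]
    exact ENNReal.ofReal_lt_top
  · refine Filter.eventually_of_mem (self_mem_ae_restrict measurableSet_Ioi) ?_
    intro s hs
    have h1 : Real.exp (-s) ≤ 1 := Real.exp_le_one_iff.mpr (by simpa using hs.le)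
    exact mul_nonneg (by linarith) (Real.rpow_nonneg hs.le _)
  · exact (kernel_integrable zero_le_one).congr_fun (fun s _ => by simp only [mul_one]) measurableSet_Ioi

lemma kernel_integral {r : ℝ} (hr : 0 ≤ r) :
    ∫ s in Set.Ioi (0:ℝ), (1 - Real.exp (-(s*r))) * s ^ (-(3:ℝ)/2) = Real.sqrt r * sqrtC := by
  rcases eq_or_lt_of_le hr with h0 | hpos
  · simp [← h0]
  · have hcongr : ∀ s ∈ Set.Ioi (0:ℝ), (1 - Real.exp (-(s*r))) * s ^ (-(3:ℝ)/2)
        = r ^ ((3:ℝ)/2) * ((1 - Real.exp (-(r*s))) * (r*s) ^ (-(3:ℝ)/2)) := by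
      intro s hs
      rw [Real.mul_rpow hpos.le (le_of_lt hs), mul_comm s r]
      rw [show r ^ ((3:ℝ)/2) * ((1 - Real.exp (-(r*s))) * (r ^ (-(3:ℝ)/2) * s ^ (-(3:ℝ)/2)))
          = (r ^ ((3:ℝ)/2) * r ^ (-(3:ℝ)/2)) * ((1 - Real.exp (-(r*s))) * s ^ (-(3:ℝ)/2)) by ring,
        ← Real.rpow_add hpos]
      norm_num
    rw [setIntegral_congr_fun measurableSet_Ioi hcongr, integral_const_mul]
    have hcomp := integral_comp_mul_left_Ioi
      (fun u => (1 - Real.exp (-u)) * u ^ (-(3:ℝ)/2)) 0 hpos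
    rw [mul_zero] at hcomp
    rw [hcomp, smul_eq_mul, ← sqrtC]
    rw [show r ^ ((3:ℝ)/2) * (r⁻¹ * sqrtC) = (r ^ ((3:ℝ)/2) * r ^ (-(1:ℝ))) * sqrtC by
      rw [Real.rpow_neg_one]; ring, ← Real.rpow_add hpos]
    rw [Real.sqrt_eq_rpow]
    norm_num

lemma negdef {n p : ℕ} (x : Fin n → EuclideanSpace ℝ (Fin p)) (c : Fin n → ℝ)
    (hc : ∑ i, c i = 0) :
    ∑ i, ∑ j, c i * c j * ‖x i - x j‖ ≤ 0 := by
  have hint : ∀ i j : Fin n, IntegrableOn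
      (fun s : ℝ => c i * c j * ((1 - Real.exp (-(s * ‖x i - x j‖^2))) * s ^ (-(3:ℝ)/2)))
      (Set.Ioi 0) := fun i j => (kernel_integrable (by positivity)).const_mul _
  have key : (∑ i, ∑ j, c i * c j * ‖x i - x j‖) * sqrtC
      = ∫ s in Set.Ioi (0:ℝ), ∑ i, ∑ j,
          c i * c j * ((1 - Real.exp (-(s * ‖x i - x j‖^2))) * s ^ (-(3:ℝ)/2)) := by
    rw [integral_finset_sum _ fun i _ => integrable_finset_sum _ fun j _ => hint i j]
    rw [Finset.sum_mul]
    refine Finset.sum_congr rfl fun i _ => ?_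
    rw [integral_finset_sum _ fun j _ => hint i j, Finset.sum_mul]
    refine Finset.sum_congr rfl fun j _ => ?_
    rw [integral_const_mul, kernel_integral (by positivity),
      Real.sqrt_sq (norm_nonneg (x i - x j))]
    ring
  have hnonpos : (∫ s in Set.Ioi (0:ℝ), ∑ i, ∑ j,
      c i * c j * ((1 - Real.exp (-(s * ‖x i - x j‖^2))) * s ^ (-(3:ℝ)/2))) ≤ 0 := by
    refine integral_nonpos_of_ae ?_
    filter_upwards [self_mem_ae_restrict measurableSet_Ioi] with s hs
    have hs0 : (0:ℝ) < s := hs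
    have hexpand : ∀ i j : Fin n,
        c i * c j * ((1 - Real.exp (-(s * ‖x i - x j‖^2))) * s ^ (-(3:ℝ)/2))
        = c i * (c j * s ^ (-(3:ℝ)/2))
          - c i * c j * Real.exp (-(s * ‖x i - x j‖^2)) * s ^ (-(3:ℝ)/2) := by
      intro i j; ring
    simp_rw [hexpand, Finset.sum_sub_distrib, ← Finset.mul_sum, ← Finset.sum_mul, hc]
    simp only [zero_mul, zero_sub, neg_nonpos, Pi.zero_apply]
    exact mul_nonneg (gauss_pd x c hs0.le) (Real.rpow_nonneg hs0.le _)
  have hC := sqrtC_pos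
  nlinarith [key, hnonpos]

lemma dc_sq {n : ℕ} (u : Fin n → ℝ) (i j : Fin n) :
    doubleCenter (fun i j => (u i - u j)^2/2) i j
      = -((u i - (∑ k, u k)/n) * (u j - (∑ k, u k)/n)) := by
  have hn : 0 < n := i.pos
  have hn' : (n:ℝ) ≠ 0 := Nat.cast_ne_zero.mpr hn.ne'
  have h1 : ∀ v : ℝ, ∑ k, (u k - v)^2/2 = (∑ k, (u k)^2)/2 - (∑ k, u k)*v + n*(v^2/2) := by
    intro v
    rw [Finset.sum_congr rfl (fun k _ => show (u k - v)^2/2 = ((u k)^2/2 - u k * v) + v^2/2 by ring),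
      Finset.sum_add_distrib, Finset.sum_sub_distrib, ← Finset.sum_div, ← Finset.sum_mul,
      Finset.sum_const, Finset.card_univ, Fintype.card_fin, nsmul_eq_mul]
  have hsym : ∀ w v : ℝ, (w - v)^2/2 = (v - w)^2/2 := fun w v => by ring
  have h2 : ∑ k, ∑ l, (u k - u l)^2/2
      = (n:ℝ) * ((∑ l, (u l)^2)/2) - (∑ l, u l)*(∑ k, u k) + (n:ℝ)*((∑ k, (u k)^2)/2) := by
    rw [Finset.sum_congr rfl (fun k _ => show (∑ l, (u k - u l)^2/2)
        = ((∑ l, (u l)^2)/2 - (∑ l, u l)*(u k)) + (n:ℝ)*((u k)^2/2) by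
      rw [Finset.sum_congr rfl fun l _ => hsym (u k) (u l), h1 (u k)])]
    rw [Finset.sum_add_distrib, Finset.sum_sub_distrib, Finset.sum_const, Finset.card_univ,
      Fintype.card_fin, nsmul_eq_mul, ← Finset.mul_sum, ← Finset.mul_sum, ← Finset.sum_div]
  simp only [doubleCenter]
  rw [h1 (u j), Finset.sum_congr rfl (fun k _ => hsym (u i) (u k)), h1 (u i), h2]
  field_simp
  ring

lemma doubleCenter_sum {n : ℕ} {ι : Type*} [Fintype ι] (r : ι → Fin n → Fin n → ℝ) (i j : Fin n) :
    doubleCenter (fun i j => ∑ k, r k i j) i j = ∑ k, doubleCenter (r k) i j := by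
  simp only [doubleCenter]
  rw [Finset.sum_comm (f := fun (a : Fin n) (k : ι) => r k a j),
    Finset.sum_comm (f := fun (a : Fin n) (k : ι) => r k i a)]
  rw [show ∑ k : Fin n, ∑ l : Fin n, ∑ m : ι, r m k l
      = ∑ m : ι, ∑ k : Fin n, ∑ l : Fin n, r m k l from
    (Finset.sum_congr rfl fun k _ => Finset.sum_comm).trans Finset.sum_comm]
  rw [Finset.sum_add_distrib, Finset.sum_sub_distrib, Finset.sum_sub_distrib,
    ← Finset.sum_div, ← Finset.sum_div, ← Finset.sum_div]

lemma sum_mul_doubleCenter {n : ℕ} (a : Fin n → Fin n → ℝ) (c : Fin n → ℝ)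
    (hc : ∑ i, c i = 0) :
    ∑ i, ∑ j, c i * c j * doubleCenter a i j = ∑ i, ∑ j, c i * c j * a i j := by
  have expand : ∀ i j, c i * c j * doubleCenter a i j
      = c i * c j * a i j - c i * (c j * ((∑ k, a k j)/(n:ℝ)))
        - (c i * ((∑ k, a i k)/(n:ℝ))) * c j
        + c i * (c j * ((∑ k, ∑ l, a k l)/(n:ℝ)^2)) := by
    intro i j; simp only [doubleCenter]; ring
  simp_rw [expand, Finset.sum_add_distrib, Finset.sum_sub_distrib, ← Finset.mul_sum,
    ← Finset.sum_mul, hc]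
  simp

lemma euclid_norm_sq_eq {q : ℕ} (v : EuclideanSpace ℝ (Fin q)) : ‖v‖^2 = ∑ k, (v k)^2 := by
  rw [EuclideanSpace.norm_eq, Real.sq_sqrt (by positivity)]
  simp [sq_abs]

end aux

/-- For any points `X_1,…,X_n ∈ ℝ^p` and `Y_1,…,Y_n ∈ ℝ^q`, the squared
empirical martingale difference divergence is nonnegative: `MDD_n²(Y|X) ≥ 0`. -/
theorem mddnSq_nonneg {n p q : ℕ}
    (X : Fin n → EuclideanSpace ℝ (Fin p)) (Y : Fin n → EuclideanSpace ℝ (Fin q)) :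
    0 ≤ mddnSq X Y := by
  rcases Nat.eq_zero_or_pos n with hn | hn
  · subst hn; simp [mddnSq]
  have hn' : (n:ℝ) ≠ 0 := Nat.cast_ne_zero.mpr hn.ne'
  rw [mddnSq]
  apply div_nonneg _ (by positivity)
  set cy : Fin q → Fin n → ℝ := fun k i => Y i k - (∑ l, Y l k)/n with hcy
  have hck : ∀ k, ∑ i, cy k i = 0 := by
    intro k
    simp only [hcy]
    rw [Finset.sum_sub_distrib, Finset.sum_const, Finset.card_univ, Fintype.card_fin,
      nsmul_eq_mul]
    field_simp
    ring
  have hB : ∀ i j, doubleCenter (fun i j => ‖Y i - Y j‖^2/2) i j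
      = ∑ k, -(cy k i * cy k j) := by
    intro i j
    have h1 : (fun i j : Fin n => ‖Y i - Y j‖^2/2)
        = fun i j => ∑ k, ((Y i k - Y j k)^2/2) := by
      funext i j
      rw [euclid_norm_sq_eq (Y i - Y j), Finset.sum_div]
      exact Finset.sum_congr rfl fun k _ => by simp
    rw [h1, doubleCenter_sum (fun k i j => (Y i k - Y j k)^2/2) i j]
    exact Finset.sum_congr rfl fun k _ => by
      rw [dc_sq (fun i => Y i k) i j]
  calc (0:ℝ) ≤ ∑ k : Fin q, -(∑ i, ∑ j, cy k i * cy k j * ‖X i - X j‖) :=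
        Finset.sum_nonneg fun k _ => neg_nonneg.mpr (negdef X (cy k) (hck k))
    _ = ∑ k : Fin q, -(∑ i, ∑ j, cy k i * cy k j
          * doubleCenter (fun i j => ‖X i - X j‖) i j) := by
        refine Finset.sum_congr rfl fun k _ => ?_
        rw [sum_mul_doubleCenter (fun i j => ‖X i - X j‖) (cy k) (hck k)]
    _ = ∑ k : Fin q, ∑ i, ∑ j, -(cy k i * cy k j
          * doubleCenter (fun i j => ‖X i - X j‖) i j) := by
        refine Finset.sum_congr rfl fun k _ => ?_
        rw [← Finset.sum_neg_distrib]
        exact Finset.sum_congr rfl fun i _ => (Finset.sum_neg_distrib _).symm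
    _ = ∑ i, ∑ j, ∑ k : Fin q, -(cy k i * cy k j
          * doubleCenter (fun i j => ‖X i - X j‖) i j) :=
        (Finset.sum_comm.trans (Finset.sum_congr rfl fun i _ => Finset.sum_comm))
    _ = ∑ i, ∑ j, doubleCenter (fun i j => ‖X i - X j‖) i j
          * doubleCenter (fun i j => ‖Y i - Y j‖ ^ 2 / 2) i j := by
        refine Finset.sum_congr rfl fun i _ => Finset.sum_congr rfl fun j _ => ?_
        rw [hB i j, Finset.mul_sum]
        exact Finset.sum_congr rfl fun k _ => by ring
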